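/- Let 𝕏 be a compact metric space, f:𝕏→𝕏 a Borel measurable map and x∈𝕏. If η_x is a probability measure, i.e. η_x(𝕏)=1, then ∫φ dη_x = limsup_{n→∞}(1/n)∑_{j=0}^{n−1}φ(f^j(x)) for every continuous function φ:𝕏→ℝ. -/

import Mathlib

open MeasureTheory Filter Set Topology
open scoped ENNReal NNReal BoundedContinuousFunction

/-- The premeasure `τ_x(A) = limsup_n (1/n) ∑_{j<n} 1_A(f^j x)`. -/
noncomputable def tauOrbit {X : Type*} (f : X → X) (x : X) (A : Set X) : ℝ≥0∞ :=
  Filter.atTop.limsup fun n : ℕ =>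
    (∑ j ∈ Finset.range n, A.indicator (fun _ => (1 : ℝ≥0∞)) (f^[j] x)) / (n : ℝ≥0∞)

/-- `ν_r(Y)`: infimum of `∑_i τ_x(I_i)` over countable covers of `Y` by open sets of
diameter at most `r`. -/
noncomputable def nuAux {X : Type*} [MetricSpace X] (f : X → X) (x : X) (r : ℝ)
    (Y : Set X) : ℝ≥0∞ :=
  ⨅ (I : ℕ → Set X) (_ : Y ⊆ ⋃ n, I n) (_ : ∀ n, IsOpen (I n))
    (_ : ∀ n, EMetric.diam (I n) ≤ ENNReal.ofReal r), ∑' n, tauOrbit f x (I n)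

/-- `ν(Y) = sup_{r>0} ν_r(Y)`, the Carathéodory Method II construction from `τ_x`. -/
noncomputable def nuFun {X : Type*} [MetricSpace X] (f : X → X) (x : X) (Y : Set X) : ℝ≥0∞ :=
  ⨆ (r : ℝ) (_ : 0 < r), nuAux f x r Y

/-- Two-term subadditivity of `limsup` in `ℝ≥0∞` along `atTop`. -/
lemma limsup_add_le_aux (u v : ℕ → ℝ≥0∞) :
    Filter.atTop.limsup (fun n => u n + v n) ≤
      Filter.atTop.limsup u + Filter.atTop.limsup v := by
  by_cases hu : Filter.atTop.limsup u = ⊤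
  · simp [hu]
  by_cases hv : Filter.atTop.limsup v = ⊤
  · simp [hv]
  refine ENNReal.le_of_forall_pos_le_add fun ε hε _ => ?_
  have hε2 : ((ε / 2 : ℝ≥0) : ℝ≥0∞) ≠ 0 :=
    ENNReal.coe_ne_zero.mpr (half_pos hε).ne'
  have hu' : Filter.atTop.limsup u < Filter.atTop.limsup u + (ε / 2 : ℝ≥0) :=
    ENNReal.lt_add_right hu hε2
  have hv' : Filter.atTop.limsup v < Filter.atTop.limsup v + (ε / 2 : ℝ≥0) :=
    ENNReal.lt_add_right hv hε2
  have h1 := Filter.eventually_lt_of_limsup_lt hu'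
  have h2 := Filter.eventually_lt_of_limsup_lt hv'
  refine Filter.limsup_le_of_le (by isBoundedDefault) ?_
  filter_upwards [h1, h2] with n hn1 hn2
  calc u n + v n ≤ (Filter.atTop.limsup u + (ε / 2 : ℝ≥0)) +
        (Filter.atTop.limsup v + (ε / 2 : ℝ≥0)) := add_le_add hn1.le hn2.le
    _ = Filter.atTop.limsup u + Filter.atTop.limsup v + ((ε / 2 : ℝ≥0) + (ε / 2 : ℝ≥0)) := by
        ring
    _ = Filter.atTop.limsup u + Filter.atTop.limsup v + (ε : ℝ≥0∞) := by
        rw [← ENNReal.coe_add, add_halves]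

/-- Finite subadditivity of `limsup` in `ℝ≥0∞` along `atTop`. -/
lemma limsup_sum_le_aux {ι : Type*} (t : Finset ι) (g : ι → ℕ → ℝ≥0∞) :
    Filter.atTop.limsup (fun n => ∑ i ∈ t, g i n) ≤ ∑ i ∈ t, Filter.atTop.limsup (g i) := by
  classical
  induction t using Finset.induction with
  | empty => simp
  | @insert a s ha ih =>
    simp only [Finset.sum_insert ha]
    exact (limsup_add_le_aux _ _).trans (add_le_add le_rfl ih)

/-- Let `𝕏` be a compact metric space, `f : 𝕏 → 𝕏` Borel measurable and `x ∈ 𝕏`. If `η_x`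
is a probability measure, then `∫ φ dη_x = limsup_n (1/n) ∑_{j<n} φ(f^j x)` for every
continuous `φ : 𝕏 → ℝ`. -/
theorem integral_eta_eq_limsup_birkhoff
    {X : Type*} [MetricSpace X] [CompactSpace X] [MeasurableSpace X] [BorelSpace X]
    (f : X → X) (hf : Measurable f) (x : X)
    (η : X → Measure X) (hη : ∀ y : X, ∀ E : Set X, MeasurableSet E → η y E = nuFun f y E)
    (hprob : η x Set.univ = 1) :
    ∀ φ : X → ℝ, Continuous φ →
      ∫ y, φ y ∂(η x) =
        Filter.atTop.limsup
          (fun n : ℕ => (∑ j ∈ Finset.range n, φ (f^[j] x)) / (n : ℝ)) := by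
  intro φ hφ
  haveI hetaProb : IsProbabilityMeasure (η x) := ⟨hprob⟩
  -- The Birkhoff averaging measures.
  set M : ℕ → Measure X :=
    fun n => ((n : ℝ≥0∞)⁻¹) • ∑ j ∈ Finset.range n, Measure.dirac (f^[j] x) with hM
  have hMapp : ∀ (n : ℕ) (A : Set X), MeasurableSet A →
      M n A = (∑ j ∈ Finset.range n, A.indicator (fun _ => (1 : ℝ≥0∞)) (f^[j] x))
        / (n : ℝ≥0∞) := by
    intro n A hA
    simp only [hM, Measure.smul_apply, Measure.finset_sum_apply,
      Measure.dirac_apply' _ hA, smul_eq_mul]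
    rw [div_eq_mul_inv, mul_comm]
    rfl
  haveI hMprob : ∀ n : ℕ, IsProbabilityMeasure (M (n + 1)) := by
    intro n
    constructor
    rw [hMapp (n + 1) Set.univ MeasurableSet.univ]
    simp only [Set.indicator_univ, Finset.sum_const, Finset.card_range, nsmul_eq_mul, mul_one]
    exact ENNReal.div_self (by exact_mod_cast Nat.succ_ne_zero n) (ENNReal.natCast_ne_top _)
  have htau : ∀ A : Set X, MeasurableSet A →
      tauOrbit f x A = Filter.atTop.limsup (fun n => M n A) := by
    intro A hA
    exact Filter.limsup_congr (Filter.Eventually.of_forall fun n => (hMapp n A hA).symm)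
  -- Key estimate: for closed sets the limsup of orbit averages is at most `η x`.
  have key : ∀ F : Set X, IsClosed F → Filter.atTop.limsup (fun n => M n F) ≤ η x F := by
    intro F hF
    rw [hη x F hF.measurableSet, ← htau F hF.measurableSet]
    unfold nuFun
    refine le_trans ?_ (le_iSup₂ (f := fun (r : ℝ) (_ : 0 < r) => nuAux f x r F) 1 one_pos)
    unfold nuAux
    refine le_iInf fun I => le_iInf fun hcov => le_iInf fun hop => le_iInf fun _ => ?_
    obtain ⟨t, ht⟩ := hF.isCompact.elim_finite_subcover I hop hcov
    refine le_trans ?_ (ENNReal.sum_le_tsum t)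
    have pt : ∀ n : ℕ,
        (∑ j ∈ Finset.range n, F.indicator (fun _ => (1 : ℝ≥0∞)) (f^[j] x)) / (n : ℝ≥0∞)
          ≤ ∑ i ∈ t, (∑ j ∈ Finset.range n,
              (I i).indicator (fun _ => (1 : ℝ≥0∞)) (f^[j] x)) / (n : ℝ≥0∞) := by
      intro n
      have swap : ∑ i ∈ t, (∑ j ∈ Finset.range n,
            (I i).indicator (fun _ => (1 : ℝ≥0∞)) (f^[j] x)) / (n : ℝ≥0∞)
          = (∑ j ∈ Finset.range n, ∑ i ∈ t,
              (I i).indicator (fun _ => (1 : ℝ≥0∞)) (f^[j] x)) / (n : ℝ≥0∞) := by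
        simp only [div_eq_mul_inv, ← Finset.sum_mul]
        rw [Finset.sum_comm]
      rw [swap]
      refine ENNReal.div_le_div_right (Finset.sum_le_sum fun j _ => ?_) _
      by_cases hy : f^[j] x ∈ F
      · rw [Set.indicator_of_mem hy]
        obtain ⟨i, hi, hyi⟩ := Set.mem_iUnion₂.mp (ht hy)
        calc (1 : ℝ≥0∞) = (I i).indicator (fun _ => (1 : ℝ≥0∞)) (f^[j] x) :=
              (Set.indicator_of_mem hyi (fun _ => (1 : ℝ≥0∞))).symm
          _ ≤ ∑ i ∈ t, (I i).indicator (fun _ => (1 : ℝ≥0∞)) (f^[j] x) :=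
              Finset.single_le_sum (f := fun i => (I i).indicator (fun _ => (1 : ℝ≥0∞)) (f^[j] x))
                (fun _ _ => zero_le) hi
      · rw [Set.indicator_of_notMem hy]
        exact zero_le
    unfold tauOrbit
    refine le_trans (Filter.limsup_le_limsup (Filter.Eventually.of_forall pt)) ?_
    exact limsup_sum_le_aux t _
  -- Portmanteau: open sets condition for the shifted sequence.
  have hopens : ∀ G, IsOpen G → η x G ≤ Filter.atTop.liminf (fun i => M (i + 1) G) := by
    have hclosed : ∀ F, IsClosed F →
        Filter.atTop.limsup (fun i => M (i + 1) F) ≤ η x F := by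
      intro F hF
      have h := key F hF
      rwa [← Filter.limsup_nat_add (fun n => M n F) 1] at h
    exact (@limsup_measure_closed_le_iff_liminf_measure_open_ge X _ _ _ ℕ Filter.atTop
      (η x) (fun i => M (i + 1)) hetaProb hMprob).mp hclosed
  -- Bounded continuous machinery.
  set φb : X →ᵇ ℝ := BoundedContinuousFunction.mkOfCompact ⟨φ, hφ⟩ with hφb
  set C : ℝ := ‖φb‖ with hC
  have hφint : ∀ (μ : Measure X) [IsFiniteMeasure μ], Integrable φ μ := by
    intro μ _
    exact φb.integrable μ
  have habs : ∀ y : X, |φ y| ≤ C := fun y => φb.norm_coe_le_norm y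
  -- Integral of φ against M n.
  have hint : ∀ n : ℕ, ∫ y, φ y ∂(M n) = (∑ j ∈ Finset.range n, φ (f^[j] x)) / (n : ℝ) := by
    intro n
    rw [hM]
    rw [integral_smul_measure, integral_finset_sum_measure (fun j _ => hφint _)]
    simp only [integral_dirac]
    rw [ENNReal.toReal_inv, ENNReal.toReal_natCast, smul_eq_mul, mul_comm, ← div_eq_mul_inv]
  set u : ℕ → ℝ := fun n => ∫ y, φ y ∂(M (n + 1)) with hu
  set Iη : ℝ := ∫ y, φ y ∂(η x) with hIη
  have hub : ∀ n, |u n| ≤ C := by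
    intro n
    haveI := hMprob n
    have h2 := norm_integral_le_of_norm_le_const (μ := M (n + 1)) (C := C) (f := φ)
      (Filter.Eventually.of_forall fun y => by rw [Real.norm_eq_abs]; exact habs y)
    simpa [measure_univ] using h2
  have hIb : |Iη| ≤ C := by
    haveI := hetaProb
    have h2 := norm_integral_le_of_norm_le_const (μ := η x) (C := C) (f := φ)
      (Filter.Eventually.of_forall fun y => by rw [Real.norm_eq_abs]; exact habs y)
    simpa [hprob] using h2
  have hb1 : Filter.IsBoundedUnder (· ≤ ·) Filter.atTop u :=
    Filter.isBoundedUnder_of ⟨C, fun n => (abs_le.mp (hub n)).2⟩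
  have hb2 : Filter.IsBoundedUnder (· ≥ ·) Filter.atTop u :=
    Filter.isBoundedUnder_of ⟨-C, fun n => (abs_le.mp (hub n)).1⟩
  have hcb1 : Filter.IsCoboundedUnder (· ≥ ·) Filter.atTop u := hb1.isCoboundedUnder_ge
  have hcb2 : Filter.IsCoboundedUnder (· ≤ ·) Filter.atTop u := hb2.isCoboundedUnder_le
  -- integral computations for probability measures
  have hint2 : ∀ (μ : Measure X) [IsProbabilityMeasure μ],
      ∫ y, (φ y + C) ∂μ = (∫ y, φ y ∂μ) + C := by
    intro μ _
    rw [integral_add (hφint μ) (integrable_const C), integral_const]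
    simp
  have hint3 : ∀ (μ : Measure X) [IsProbabilityMeasure μ],
      ∫ y, (C - φ y) ∂μ = C - ∫ y, φ y ∂μ := by
    intro μ _
    rw [integral_sub (integrable_const C) (hφint μ), integral_const]
    simp
  -- First inequality : Iη ≤ liminf u
  have ineq1 : Iη ≤ Filter.atTop.liminf u := by
    have h := integral_le_liminf_integral_of_forall_isOpen_measure_le_liminf_measure
      (μ := η x) (μs := fun n => M (n + 1)) (f := φb + BoundedContinuousFunction.const X C)
      (φb.add_norm_nonneg) hopens
    have hco : ∀ (μ : Measure X), IsProbabilityMeasure μ →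
        ∫ y, (φb + BoundedContinuousFunction.const X C) y ∂μ = (∫ y, φ y ∂μ) + C := by
      intro μ hμ
      haveI := hμ
      have : ∀ y, (φb + BoundedContinuousFunction.const X C) y = φ y + C := by
        intro y
        simp [hφb]
      rw [integral_congr_ae (Filter.Eventually.of_forall this)]
      exact hint2 μ
    rw [hco (η x) hetaProb] at h
    have hlim : Filter.atTop.liminf (fun i => ∫ y,
        (φb + BoundedContinuousFunction.const X C) y ∂(M (i + 1)))
        = Filter.atTop.liminf u + C := by
      have : (fun i => ∫ y, (φb + BoundedContinuousFunction.const X C) y ∂(M (i + 1)))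
          = fun i => u i + C := by
        funext i
        haveI := hMprob i
        rw [hco (M (i + 1)) (hMprob i)]
      rw [this]
      exact liminf_add_const Filter.atTop u C hcb1 hb2
    rw [hlim] at h
    linarith
  -- Second inequality : limsup u ≤ Iη
  have ineq2 : Filter.atTop.limsup u ≤ Iη := by
    have h := integral_le_liminf_integral_of_forall_isOpen_measure_le_liminf_measure
      (μ := η x) (μs := fun n => M (n + 1)) (f := BoundedContinuousFunction.const X C - φb)
      (φb.norm_sub_nonneg) hopens
    have hco : ∀ (μ : Measure X), IsProbabilityMeasure μ →
        ∫ y, (BoundedContinuousFunction.const X C - φb) y ∂μ = C - ∫ y, φ y ∂μ := by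
      intro μ hμ
      haveI := hμ
      have : ∀ y, (BoundedContinuousFunction.const X C - φb) y = C - φ y := by
        intro y
        simp [hφb]
      rw [integral_congr_ae (Filter.Eventually.of_forall this)]
      exact hint3 μ
    rw [hco (η x) hetaProb] at h
    have hlim : Filter.atTop.liminf (fun i => ∫ y,
        (BoundedContinuousFunction.const X C - φb) y ∂(M (i + 1)))
        = C - Filter.atTop.limsup u := by
      have : (fun i => ∫ y, (BoundedContinuousFunction.const X C - φb) y ∂(M (i + 1)))
          = fun i => C - u i := by
        funext i
        haveI := hMprob i
        rw [hco (M (i + 1)) (hMprob i)]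
      rw [this]
      exact liminf_const_sub Filter.atTop u C hb1 hcb2
    rw [hlim] at h
    have hls : |Filter.atTop.limsup u| ≤ C := by
      rw [abs_le]
      constructor
      · exact Filter.le_limsup_of_frequently_le
          (Filter.Eventually.of_forall (fun n => (abs_le.mp (hub n)).1)).frequently hb1
      · exact Filter.limsup_le_of_le hcb2
          (Filter.Eventually.of_forall fun n => (abs_le.mp (hub n)).2)
    linarith [(abs_le.mp hls).1, (abs_le.mp hls).2]
  -- Conclude convergence of u to Iη
  have htend : Filter.Tendsto u Filter.atTop (𝓝 Iη) :=
    tendsto_of_le_liminf_of_limsup_le ineq1 ineq2 hb1 hb2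
  have htendB : Filter.Tendsto
      (fun n : ℕ => (∑ j ∈ Finset.range n, φ (f^[j] x)) / (n : ℝ))
      Filter.atTop (𝓝 Iη) := by
    rw [← Filter.tendsto_add_atTop_iff_nat 1]
    exact htend.congr fun n => hint (n + 1)
  exact htendB.limsup_eq.symm
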